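/- Let k, t, z, Ē be real numbers with k ≠ 0, and let r > 0. Define λ(ζ) = k + Ē²/(2(ζ − k)) for ζ ≠ k. Then (1/(2πi))·∮_{|ζ−k|=r} e^{i(tζ − z k λ(ζ))}/(ζ − k) dζ = e^{i(tk − zk²)}·∑_{n=0}^∞ (k Ē² t z/2)ⁿ/(n!)², where the contour is the positively oriented circle of radius r centred at k and the series converges absolutely. -/

import Mathlib

set_option maxHeartbeats 1000000

open Complex Real ENNReal MeasureTheory

open Complex Real ENNReal MeasureTheory

lemma Fterm (n m : ℕ) (θ : ℝ) (a b : ℂ) (r : ℝ) :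
    (a * (r * Complex.exp (θ * Complex.I))) ^ n / n.factorial *
      ((b * (r * Complex.exp (θ * Complex.I))⁻¹) ^ m / m.factorial)
    = (a ^ n * r ^ n / n.factorial * (b ^ m * ((r:ℂ))⁻¹ ^ m / m.factorial)) *
        Complex.exp ((((n:ℂ) - (m:ℂ)) * Complex.I) * θ) := by
  have he : (Complex.exp (θ * Complex.I))⁻¹ = Complex.exp (-(θ * Complex.I)) :=
    (Complex.exp_neg _).symm
  rw [mul_pow, mul_pow, mul_pow, mul_inv, he, mul_pow, ← Complex.exp_nat_mul,
    ← Complex.exp_nat_mul,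
    show (((n:ℂ) - (m:ℂ)) * Complex.I) * θ = (n:ℂ) * (θ * Complex.I) + (m:ℂ) * -(θ * Complex.I)
      by ring, Complex.exp_add]
  ring

lemma Fint (n m : ℕ) (a b : ℂ) (r : ℝ) (hr : 0 < r) :
    (∫ θ in (0:ℝ)..(2*Real.pi),
      (a * (r * Complex.exp (θ * Complex.I))) ^ n / n.factorial *
        ((b * (r * Complex.exp (θ * Complex.I))⁻¹) ^ m / m.factorial))
    = if n = m then (2*Real.pi) * ((a*b) ^ n / ((n.factorial : ℂ))^2) else 0 := by
  simp only [Fterm n m _ a b r]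
  rw [intervalIntegral.integral_const_mul]
  rcases eq_or_ne n m with h | h
  · subst h
    simp only [sub_self, zero_mul, Complex.exp_zero, if_pos rfl]
    rw [intervalIntegral.integral_const, sub_zero]
    have hrr : (r:ℂ) ^ n * ((r:ℂ))⁻¹ ^ n = 1 := by
      rw [← mul_pow, mul_inv_cancel₀ (by exact_mod_cast hr.ne' : (r:ℂ) ≠ 0), one_pow]
    have e1 : a ^ n * (r:ℂ) ^ n / (n.factorial:ℂ) * (b ^ n * ((r:ℂ))⁻¹ ^ n / (n.factorial:ℂ))
        = (a*b) ^ n / ((n.factorial:ℂ))^2 := by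
      rw [div_mul_div_comm, sq,
        show a ^ n * (r:ℂ) ^ n * (b ^ n * ((r:ℂ))⁻¹ ^ n) = (a*b) ^ n by
          rw [mul_pow a b]; linear_combination a ^ n * b ^ n * hrr]
    rw [e1]
    simp [Complex.real_smul, mul_comm]
  · rw [if_neg h]
    have hc : ((n:ℂ) - (m:ℂ)) * Complex.I ≠ 0 := by
      apply mul_ne_zero _ Complex.I_ne_zero
      rw [sub_ne_zero]
      exact_mod_cast h
    rw [integral_exp_mul_complex hc]
    have h1 : Complex.exp (((n:ℂ) - (m:ℂ)) * Complex.I * (2*(Real.pi:ℂ))) = 1 := by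
      have := Complex.exp_int_mul_two_pi_mul_I ((n:ℤ) - (m:ℤ))
      rw [← this]
      push_cast
      ring_nf
    push_cast
    rw [h1]
    simp

lemma diag_tsum (x : ℂ) (c : ℝ) :
    (∑' p : ℕ × ℕ, (if p.1 = p.2 then (c:ℂ) * (x ^ p.1 / ((p.1.factorial : ℂ))^2) else 0))
    = ∑' n : ℕ, (c:ℂ) * (x ^ n / ((n.factorial : ℂ))^2) := by
  apply tsum_eq_tsum_of_ne_zero_bij
    (i := fun q => ((q.1 : ℕ), (q.1 : ℕ)))
  · intro q q' hqq'
    exact Subtype.ext (congrArg Prod.fst hqq')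
  · rintro ⟨n, m⟩ hp
    simp only [Function.mem_support, ne_eq] at hp
    by_cases h : n = m
    · subst h
      refine ⟨⟨n, ?_⟩, rfl⟩
      simp only [Function.mem_support, ne_eq]
      simpa using hp
    · simp [h] at hp
  · intro q
    simp

lemma expHasSum (u v : ℂ) : HasSum (fun p : ℕ × ℕ =>
      u ^ p.1 / p.1.factorial * (v ^ p.2 / p.2.factorial)) (Complex.exp (u + v)) := by
  rw [Complex.exp_add]
  have hu : HasSum (fun n : ℕ => u ^ n / n.factorial) (Complex.exp u) := by
    rw [Complex.exp_eq_exp_ℂ]; exact NormedSpace.expSeries_div_hasSum_exp u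
  have hv : HasSum (fun n : ℕ => v ^ n / n.factorial) (Complex.exp v) := by
    rw [Complex.exp_eq_exp_ℂ]; exact NormedSpace.expSeries_div_hasSum_exp v
  have hsum : Summable (fun p : ℕ × ℕ =>
      u ^ p.1 / p.1.factorial * (v ^ p.2 / p.2.factorial)) := by
    apply Summable.of_norm
    have h2 := (Real.summable_pow_div_factorial ‖u‖).mul_of_nonneg
      (Real.summable_pow_div_factorial ‖v‖)
      (fun n => by positivity) (fun n => by positivity)
    apply h2.congr
    intro p
    simp [norm_div, norm_pow]
  exact HasSum.mul (f := fun n : ℕ => u ^ n / n.factorial)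
    (g := fun n : ℕ => v ^ n / n.factorial) hu hv hsum

lemma key_integral (a b : ℂ) (r : ℝ) (hr : 0 < r) :
    (∫ θ in (0:ℝ)..(2*Real.pi),
      Complex.exp (a * (r * Complex.exp (θ * Complex.I)) +
        b * (r * Complex.exp (θ * Complex.I))⁻¹))
    = (2*Real.pi) * ∑' n : ℕ, (a*b) ^ n / ((n.factorial : ℂ))^2 := by
  have h2pi : (0:ℝ) ≤ 2*Real.pi := by positivity
  set F : ℕ × ℕ → ℝ → ℂ := fun p θ =>
    (a * (r * Complex.exp (θ * Complex.I))) ^ p.1 / p.1.factorial *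
      ((b * (r * Complex.exp (θ * Complex.I))⁻¹) ^ p.2 / p.2.factorial) with hF
  have hwne : ∀ θ : ℝ, (r:ℂ) * Complex.exp (θ * Complex.I) ≠ 0 :=
    fun θ => mul_ne_zero (by exact_mod_cast hr.ne') (Complex.exp_ne_zero _)
  have hwcont : Continuous fun θ : ℝ => (r:ℂ) * Complex.exp (θ * Complex.I) := by
    continuity
  have hcont : ∀ p : ℕ × ℕ, Continuous (F p) := by
    intro p
    exact (((continuous_const.mul hwcont).pow p.1).div_const _).mul
      (((continuous_const.mul (hwcont.inv₀ hwne)).pow p.2).div_const _)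
  have hnorm : ∀ (p : ℕ × ℕ) (θ : ℝ),
      ‖F p θ‖ = (‖a‖*r) ^ p.1 / p.1.factorial * ((‖b‖*r⁻¹) ^ p.2 / p.2.factorial) := by
    intro p θ
    simp [hF, norm_div, norm_mul, norm_pow, Complex.norm_exp, abs_of_pos hr, mul_pow]
  have hcsum : Summable (fun p : ℕ × ℕ =>
      (‖a‖*r) ^ p.1 / p.1.factorial * ((‖b‖*r⁻¹) ^ p.2 / p.2.factorial)) :=
    Summable.mul_of_nonneg (f := fun n : ℕ => (‖a‖*r) ^ n / n.factorial)
      (g := fun n : ℕ => (‖b‖*r⁻¹) ^ n / n.factorial)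
      (Real.summable_pow_div_factorial _) (Real.summable_pow_div_factorial _)
      (fun n => by positivity) (fun n => by positivity)
  have hcnonneg : ∀ p : ℕ × ℕ,
      0 ≤ (‖a‖*r) ^ p.1 / p.1.factorial * ((‖b‖*r⁻¹) ^ p.2 / p.2.factorial) := by
    intro p
    have : (0:ℝ) ≤ ‖a‖*r := by positivity
    have : (0:ℝ) ≤ ‖b‖*r⁻¹ := by positivity
    positivity
  have hmeas : ∀ p : ℕ × ℕ,
      MeasureTheory.AEStronglyMeasurable (F p)
        (MeasureTheory.volume.restrict (Set.Ioc (0:ℝ) (2*Real.pi))) :=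
    fun p => (hcont p).aestronglyMeasurable
  have hbound : (∑' p : ℕ × ℕ, ∫⁻ θ in Set.Ioc (0:ℝ) (2*Real.pi), ‖F p θ‖₊) ≠ ⊤ := by
    have heq : ∀ p : ℕ × ℕ, (∫⁻ θ in Set.Ioc (0:ℝ) (2*Real.pi), ‖F p θ‖₊)
        = ENNReal.ofReal ((‖a‖*r) ^ p.1 / p.1.factorial * ((‖b‖*r⁻¹) ^ p.2 / p.2.factorial))
            * ENNReal.ofReal (2*Real.pi) := by
      intro p
      have : ∀ θ : ℝ, (‖F p θ‖₊ : ℝ≥0∞)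
          = ENNReal.ofReal ((‖a‖*r) ^ p.1 / p.1.factorial
              * ((‖b‖*r⁻¹) ^ p.2 / p.2.factorial)) := by
        intro θ
        rw [show (‖F p θ‖₊ : ℝ≥0∞) = ENNReal.ofReal ‖F p θ‖ from (ofReal_norm _).symm, hnorm p θ]
      simp_rw [this]
      rw [MeasureTheory.setLIntegral_const, Real.volume_Ioc]
      norm_num
    simp_rw [heq]
    rw [ENNReal.tsum_mul_right]
    apply ENNReal.mul_ne_top _ ENNReal.ofReal_ne_top
    rw [← ENNReal.ofReal_tsum_of_nonneg hcnonneg hcsum]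
    exact ENNReal.ofReal_ne_top
  have hptwise : ∀ θ : ℝ,
      Complex.exp (a * (r * Complex.exp (θ * Complex.I)) +
        b * (r * Complex.exp (θ * Complex.I))⁻¹) = ∑' p : ℕ × ℕ, F p θ :=
    fun θ => (expHasSum _ _).tsum_eq.symm
  calc (∫ θ in (0:ℝ)..(2*Real.pi),
      Complex.exp (a * (r * Complex.exp (θ * Complex.I)) +
        b * (r * Complex.exp (θ * Complex.I))⁻¹))
      = ∫ θ in Set.Ioc (0:ℝ) (2*Real.pi), ∑' p : ℕ × ℕ, F p θ := by
        rw [intervalIntegral.integral_of_le h2pi]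
        exact MeasureTheory.setIntegral_congr_fun measurableSet_Ioc fun θ _ => hptwise θ
    _ = ∑' p : ℕ × ℕ, ∫ θ in Set.Ioc (0:ℝ) (2*Real.pi), F p θ :=
        MeasureTheory.integral_tsum hmeas hbound
    _ = ∑' p : ℕ × ℕ, (if p.1 = p.2 then
          ((2*Real.pi : ℝ) : ℂ) * ((a*b) ^ p.1 / ((p.1.factorial : ℂ))^2) else 0) := by
        refine tsum_congr fun p => ?_
        rw [← intervalIntegral.integral_of_le h2pi]
        rw [Fint p.1 p.2 a b r hr]
        push_cast
        rfl
    _ = ∑' n : ℕ, ((2*Real.pi : ℝ) : ℂ) * ((a*b) ^ n / ((n.factorial : ℂ))^2) :=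
        diag_tsum (a*b) (2*Real.pi)
    _ = (2*Real.pi) * ∑' n : ℕ, (a*b) ^ n / ((n.factorial : ℂ))^2 := by
        rw [tsum_mul_left]
        norm_num

/-- Exact evaluation of the model contour integral: for real `k ≠ 0`, `t`, `z`, `Ē` and `r > 0`,
with `λ(ζ) = k + Ē²/(2(ζ−k))`,
`(1/2πi)·∮_{|ζ−k|=r} e^{i(tζ − zkλ(ζ))}/(ζ−k) dζ = e^{i(tk − zk²)}·∑ (kĒ²tz/2)ⁿ/(n!)²`,
and the series converges absolutely. -/
theorem contour_integral_eq_besselI0 (k t z E : ℝ) (hk : k ≠ 0) (r : ℝ) (hr : 0 < r) :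
    (Summable fun n : ℕ =>
      ‖((((k * E ^ 2 * t * z / 2 : ℝ) : ℂ)) ^ n / ((n.factorial : ℂ) ^ 2))‖) ∧
    (1 / (2 * Real.pi * Complex.I)) *
        (∮ ζ in C((k : ℂ), r),
          Complex.exp (Complex.I * ((t : ℂ) * ζ -
            (z : ℂ) * (k : ℂ) * ((k : ℂ) + (E : ℂ) ^ 2 / (2 * (ζ - (k : ℂ)))))) / (ζ - (k : ℂ)))
      = Complex.exp (Complex.I * ((t : ℂ) * (k : ℂ) - (z : ℂ) * (k : ℂ) ^ 2)) *
          ∑' n : ℕ, (((k * E ^ 2 * t * z / 2 : ℝ) : ℂ)) ^ n / ((n.factorial : ℂ) ^ 2) := by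
  constructor
  · have hb : ∀ n : ℕ,
        ‖((((k * E ^ 2 * t * z / 2 : ℝ) : ℂ)) ^ n / ((n.factorial : ℂ) ^ 2))‖
          ≤ |k * E ^ 2 * t * z / 2| ^ n / n.factorial := by
      intro n
      rw [norm_div, norm_pow, norm_pow, Complex.norm_real, Real.norm_eq_abs, Complex.norm_natCast]
      have h1 : (1:ℝ) ≤ (n.factorial : ℝ) := by exact_mod_cast n.factorial_pos
      have h2 : (n.factorial : ℝ) ≤ ((n.factorial : ℝ))^2 := by nlinarith
      exact div_le_div_of_nonneg_left (by positivity) (by linarith) h2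
    exact Summable.of_nonneg_of_le (fun n => norm_nonneg _) hb
      (Real.summable_pow_div_factorial _)
  · set a : ℂ := Complex.I * (t:ℂ) with ha
    set b : ℂ := -(Complex.I * (z:ℂ) * (k:ℂ) * (E:ℂ)^2 / 2) with hb
    have hab : a * b = (((k * E ^ 2 * t * z / 2 : ℝ) : ℂ)) := by
      rw [ha, hb]
      push_cast
      ring_nf
      rw [Complex.I_sq]
      ring
    have hwne : ∀ θ : ℝ, (r:ℂ) * Complex.exp (θ * Complex.I) ≠ 0 :=
      fun θ => mul_ne_zero (by exact_mod_cast hr.ne') (Complex.exp_ne_zero _)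
    have hint : ∀ θ : ℝ,
        ((0:ℂ) + r * Complex.exp (θ * Complex.I)) * Complex.I *
          (Complex.exp (Complex.I * ((t : ℂ) * ((k:ℂ) + r * Complex.exp (θ * Complex.I)) -
            (z : ℂ) * (k : ℂ) * ((k : ℂ) + (E : ℂ) ^ 2 /
              (2 * (((k:ℂ) + r * Complex.exp (θ * Complex.I)) - (k : ℂ)))))) /
            (((k:ℂ) + r * Complex.exp (θ * Complex.I)) - (k : ℂ)))
        = Complex.I * Complex.exp (Complex.I * ((t : ℂ) * (k : ℂ) - (z : ℂ) * (k : ℂ) ^ 2)) *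
            Complex.exp (a * ((r:ℝ) * Complex.exp (θ * Complex.I)) +
              b * ((r:ℝ) * Complex.exp (θ * Complex.I))⁻¹) := by
      intro θ
      have hw := hwne θ
      have hr0 : (r:ℂ) ≠ 0 := by exact_mod_cast hr.ne'
      rw [add_sub_cancel_left, zero_add]
      rw [show Complex.I * ((t : ℂ) * ((k:ℂ) + r * Complex.exp (θ * Complex.I)) -
            (z : ℂ) * (k : ℂ) * ((k : ℂ) + (E : ℂ) ^ 2 /
              (2 * ((r:ℂ) * Complex.exp (θ * Complex.I)))))
          = Complex.I * ((t : ℂ) * (k : ℂ) - (z : ℂ) * (k : ℂ) ^ 2) +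
            (a * ((r:ℝ) * Complex.exp (θ * Complex.I)) +
              b * ((r:ℝ) * Complex.exp (θ * Complex.I))⁻¹) from by
        rw [ha, hb]; field_simp; ring]
      rw [Complex.exp_add]
      field_simp
    rw [circleIntegral]
    simp only [deriv_circleMap, circleMap, smul_eq_mul, Complex.ofReal_zero]
    rw [intervalIntegral.integral_congr (g := fun θ =>
      Complex.I * Complex.exp (Complex.I * ((t : ℂ) * (k : ℂ) - (z : ℂ) * (k : ℂ) ^ 2)) *
        Complex.exp (a * ((r:ℝ) * Complex.exp (θ * Complex.I)) +
          b * ((r:ℝ) * Complex.exp (θ * Complex.I))⁻¹)) (fun θ _ => hint θ)]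
    rw [intervalIntegral.integral_const_mul, key_integral a b r hr]
    rw [hab]
    have hpi : (Real.pi : ℂ) ≠ 0 := by exact_mod_cast Real.pi_ne_zero
    field_simp
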